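/- For every nonzero real number a, the map L̃ of Theorem 7.1 satisfies the PDE system ∂²L̃/∂x² = (i/a³)·∂L̃/∂y, ∂²L̃/∂x∂y = −L̃, and ∂²L̃/∂y² = i·a³·∂L̃/∂x at every point of ℝ². (The middle equation says that the mixed second derivative is purely in the position direction, which expresses minimality of the projected surface π∘L̃ in CH²₁(−4).) -/

import Mathlib

open Complex

noncomputable def bHyp (z w : ℂ × ℂ × ℂ) : ℂ :=
  -(starRingEnd ℂ z.1) * w.1 - (starRingEnd ℂ z.2.1) * w.2.1
    + (starRingEnd ℂ z.2.2) * w.2.2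

noncomputable def Lch (a x y : ℝ) : ℂ × ℂ × ℂ :=
  ((1 / Real.sqrt 3 : ℝ) : ℂ) •
    (((Real.sqrt 2 : ℝ) : ℂ) * Complex.exp (-(Complex.I * ((x + a ^ 2 * y : ℝ) : ℂ)) / (2 * (a : ℂ)))
        * ((Real.cosh (Real.sqrt 3 * (x - a ^ 2 * y) / (2 * a)) : ℝ) : ℂ),
     Complex.exp (Complex.I * ((a * y + x / a : ℝ) : ℂ)),
     ((Real.sqrt 2 : ℝ) : ℂ) * Complex.exp (-(Complex.I * ((x + a ^ 2 * y : ℝ) : ℂ)) / (2 * (a : ℂ)))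
        * ((Real.sinh (Real.sqrt 3 * (x - a ^ 2 * y) / (2 * a)) : ℝ) : ℂ))



noncomputable def Eterm (c d : ℂ) (x y : ℝ) : ℂ := Complex.exp (c * x + d * y)

lemma Eterm_hasDerivAt_x (c d : ℂ) (x y : ℝ) :
    HasDerivAt (fun t : ℝ => Eterm c d t y) (c * Eterm c d x y) x := by
  have hid : HasDerivAt (fun t : ℝ => (t:ℂ)) 1 x := by
    simpa using (hasDerivAt_id x).ofReal_comp
  have h : HasDerivAt (fun t : ℝ => c * (t:ℂ) + d * (y:ℂ)) c x := by
    simpa using (hid.const_mul c).add_const (d * (y:ℂ))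
  simpa [Eterm, mul_comm] using h.cexp

lemma Eterm_hasDerivAt_y (c d : ℂ) (x y : ℝ) :
    HasDerivAt (fun t : ℝ => Eterm c d x t) (d * Eterm c d x y) y := by
  have hid : HasDerivAt (fun t : ℝ => (t:ℂ)) 1 y := by
    simpa using (hasDerivAt_id y).ofReal_comp
  have h : HasDerivAt (fun t : ℝ => c * (x:ℂ) + d * (t:ℂ)) d y := by
    simpa using ((hid.const_mul d).const_add (c * (x:ℂ)))
  simpa [Eterm, mul_comm] using h.cexp

noncomputable def cc1 (a : ℝ) : ℂ := ((Real.sqrt 3 : ℝ) - I) / (2 * a)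
noncomputable def dd1 (a : ℝ) : ℂ := -((Real.sqrt 3 : ℝ) + I) * a / 2
noncomputable def cc2 (a : ℝ) : ℂ := -((Real.sqrt 3 : ℝ) + I) / (2 * a)
noncomputable def dd2 (a : ℝ) : ℂ := ((Real.sqrt 3 : ℝ) - I) * a / 2
noncomputable def cc3 (a : ℝ) : ℂ := I / a
noncomputable def dd3 (a : ℝ) : ℂ := I * a

noncomputable def Qm (u v w : ℂ) (a x y : ℝ) : ℂ × ℂ × ℂ :=
  (((Real.sqrt 2 : ℝ) : ℂ) / (2 * ((Real.sqrt 3 : ℝ) : ℂ)) *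
      (u * Eterm (cc1 a) (dd1 a) x y + v * Eterm (cc2 a) (dd2 a) x y),
   (((Real.sqrt 3 : ℝ) : ℂ))⁻¹ * (w * Eterm (cc3 a) (dd3 a) x y),
   ((Real.sqrt 2 : ℝ) : ℂ) / (2 * ((Real.sqrt 3 : ℝ) : ℂ)) *
      (u * Eterm (cc1 a) (dd1 a) x y - v * Eterm (cc2 a) (dd2 a) x y))

lemma Qm_hasDerivAt_x (u v w : ℂ) (a x y : ℝ) :
    HasDerivAt (fun t => Qm u v w a t y)
      (Qm (u * cc1 a) (v * cc2 a) (w * cc3 a) a x y) x := by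
  have h1 := (Eterm_hasDerivAt_x (cc1 a) (dd1 a) x y).const_mul u
  have h2 := (Eterm_hasDerivAt_x (cc2 a) (dd2 a) x y).const_mul v
  have h3 := (Eterm_hasDerivAt_x (cc3 a) (dd3 a) x y).const_mul w
  have hA := ((h1.add h2).const_mul
    (((Real.sqrt 2 : ℝ) : ℂ) / (2 * ((Real.sqrt 3 : ℝ) : ℂ))))
  have hB := (h3.const_mul ((((Real.sqrt 3 : ℝ) : ℂ))⁻¹))
  have hC := ((h1.sub h2).const_mul
    (((Real.sqrt 2 : ℝ) : ℂ) / (2 * ((Real.sqrt 3 : ℝ) : ℂ))))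
  have := hA.prodMk (hB.prodMk hC)
  simp only [Pi.add_apply, Pi.sub_apply] at this
  simp only [Qm]
  convert this using 2 <;> ring

lemma Qm_hasDerivAt_y (u v w : ℂ) (a x y : ℝ) :
    HasDerivAt (fun t => Qm u v w a x t)
      (Qm (u * dd1 a) (v * dd2 a) (w * dd3 a) a x y) y := by
  have h1 := (Eterm_hasDerivAt_y (cc1 a) (dd1 a) x y).const_mul u
  have h2 := (Eterm_hasDerivAt_y (cc2 a) (dd2 a) x y).const_mul v
  have h3 := (Eterm_hasDerivAt_y (cc3 a) (dd3 a) x y).const_mul w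
  have hA := ((h1.add h2).const_mul
    (((Real.sqrt 2 : ℝ) : ℂ) / (2 * ((Real.sqrt 3 : ℝ) : ℂ))))
  have hB := (h3.const_mul ((((Real.sqrt 3 : ℝ) : ℂ))⁻¹))
  have hC := ((h1.sub h2).const_mul
    (((Real.sqrt 2 : ℝ) : ℂ) / (2 * ((Real.sqrt 3 : ℝ) : ℂ))))
  have := hA.prodMk (hB.prodMk hC)
  simp only [Pi.add_apply, Pi.sub_apply] at this
  simp only [Qm]
  convert this using 2 <;> ring

lemma Lch_eq (a : ℝ) (ha : a ≠ 0) (x y : ℝ) : Lch a x y = Qm 1 1 1 a x y := by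
  have ha' : (a : ℂ) ≠ 0 := Complex.ofReal_ne_zero.2 ha
  have e1 : -(Complex.I * ((x + a ^ 2 * y : ℝ) : ℂ)) / (2 * (a : ℂ))
      + ((Real.sqrt 3 * (x - a ^ 2 * y) / (2 * a) : ℝ) : ℂ)
      = cc1 a * x + dd1 a * y := by
    simp only [cc1, dd1]; push_cast; field_simp; ring
  have e2 : -(Complex.I * ((x + a ^ 2 * y : ℝ) : ℂ)) / (2 * (a : ℂ))
      + -((Real.sqrt 3 * (x - a ^ 2 * y) / (2 * a) : ℝ) : ℂ)
      = cc2 a * x + dd2 a * y := by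
    simp only [cc2, dd2]; push_cast; field_simp; ring
  have e3 : Complex.I * ((a * y + x / a : ℝ) : ℂ) = cc3 a * x + dd3 a * y := by
    simp only [cc3, dd3]; push_cast; field_simp; ring
  simp only [Lch, Qm, Eterm, Prod.smul_mk, Complex.real_smul, one_mul,
    Complex.ofReal_cosh, Complex.ofReal_sinh, Complex.cosh, Complex.sinh,
    ← e1, ← e2, ← e3, Complex.exp_add, Prod.mk.injEq]
  refine ⟨?_, ?_, ?_⟩ <;> rw [smul_eq_mul] <;> push_cast <;> ring

lemma hs3 : (((Real.sqrt 3 : ℝ)) : ℂ)^2 = 3 := by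
  rw [← Complex.ofReal_pow, Real.sq_sqrt (by norm_num : (3:ℝ) ≥ 0)]; norm_num

section
variable (a : ℝ) (ha : a ≠ 0)
include ha

lemma hcc1 : cc1 a * cc1 a = Complex.I / (a:ℂ)^3 * dd1 a := by
  have ha' : (a : ℂ) ≠ 0 := Complex.ofReal_ne_zero.2 ha
  simp only [cc1, dd1]; field_simp; linear_combination hs3 + 3 * Complex.I_sq

lemma hcc2 : cc2 a * cc2 a = Complex.I / (a:ℂ)^3 * dd2 a := by
  have ha' : (a : ℂ) ≠ 0 := Complex.ofReal_ne_zero.2 ha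
  simp only [cc2, dd2]; field_simp; linear_combination hs3 + 3 * Complex.I_sq

lemma hcc3 : cc3 a * cc3 a = Complex.I / (a:ℂ)^3 * dd3 a := by
  have ha' : (a : ℂ) ≠ 0 := Complex.ofReal_ne_zero.2 ha
  simp only [cc3, dd3]; field_simp

lemma hcd1 : cc1 a * dd1 a = -1 := by
  have ha' : (a : ℂ) ≠ 0 := Complex.ofReal_ne_zero.2 ha
  simp only [cc1, dd1]; field_simp; linear_combination -hs3 + Complex.I_sq

lemma hcd2 : cc2 a * dd2 a = -1 := by
  have ha' : (a : ℂ) ≠ 0 := Complex.ofReal_ne_zero.2 ha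
  simp only [cc2, dd2]; field_simp; linear_combination -hs3 + Complex.I_sq

lemma hcd3 : cc3 a * dd3 a = -1 := by
  have ha' : (a : ℂ) ≠ 0 := Complex.ofReal_ne_zero.2 ha
  simp only [cc3, dd3]; field_simp; linear_combination Complex.I_sq

lemma hdd1 : dd1 a * dd1 a = Complex.I * (a:ℂ)^3 * cc1 a := by
  have ha' : (a : ℂ) ≠ 0 := Complex.ofReal_ne_zero.2 ha
  simp only [cc1, dd1]; field_simp; linear_combination hs3 + 3 * Complex.I_sq

lemma hdd2 : dd2 a * dd2 a = Complex.I * (a:ℂ)^3 * cc2 a := by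
  have ha' : (a : ℂ) ≠ 0 := Complex.ofReal_ne_zero.2 ha
  simp only [cc2, dd2]; field_simp; linear_combination hs3 + 3 * Complex.I_sq

lemma hdd3 : dd3 a * dd3 a = Complex.I * (a:ℂ)^3 * cc3 a := by
  have ha' : (a : ℂ) ≠ 0 := Complex.ofReal_ne_zero.2 ha
  simp only [cc3, dd3]; field_simp

end

lemma Qm_congr {u v w u' v' w' : ℂ} (a x y : ℝ) (h1 : u = u') (h2 : v = v') (h3 : w = w') :
    Qm u v w a x y = Qm u' v' w' a x y := by rw [h1, h2, h3]

lemma Qm_smul (r u v w : ℂ) (a x y : ℝ) :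
    r • Qm u v w a x y = Qm (r * u) (r * v) (r * w) a x y := by
  simp only [Qm, Prod.smul_mk, smul_eq_mul, Prod.mk.injEq]
  refine ⟨by ring, by ring, by ring⟩

lemma Qm_neg (u v w : ℂ) (a x y : ℝ) :
    Qm (-u) (-v) (-w) a x y = -Qm u v w a x y := by
  simp only [Qm, Prod.neg_mk, Prod.mk.injEq]
  refine ⟨by ring, by ring, by ring⟩


/-- Theorem 7.1 (PDE system): `L̃_xx = (i/a³) L̃_y`, `L̃_xy = −L̃`, and
`L̃_yy = i a³ L̃_x`; the middle equation expresses minimality of `π ∘ L̃`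
in `CH²₁(−4)`. -/
theorem Lch_pde_system (a : ℝ) (ha : a ≠ 0) :
    ∀ x y : ℝ,
      deriv (fun s => deriv (fun t => Lch a t y) s) x
        = (Complex.I / (a : ℂ) ^ 3) • deriv (fun t => Lch a x t) y ∧
      deriv (fun s => deriv (fun t => Lch a s t) y) x = -Lch a x y ∧
      deriv (fun s => deriv (fun t => Lch a x t) s) y
        = (Complex.I * (a : ℂ) ^ 3) • deriv (fun t => Lch a t y) x := by
  intro x y
  simp only [Lch_eq a ha]
  have hx : ∀ u v w x y, deriv (fun t => Qm u v w a t y) x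
      = Qm (u * cc1 a) (v * cc2 a) (w * cc3 a) a x y :=
    fun u v w x y => (Qm_hasDerivAt_x u v w a x y).deriv
  have hy : ∀ u v w x y, deriv (fun t => Qm u v w a x t) y
      = Qm (u * dd1 a) (v * dd2 a) (w * dd3 a) a x y :=
    fun u v w x y => (Qm_hasDerivAt_y u v w a x y).deriv
  refine ⟨?_, ?_, ?_⟩
  · rw [show (fun s => deriv (fun t => Qm 1 1 1 a t y) s)
        = fun s => Qm (1 * cc1 a) (1 * cc2 a) (1 * cc3 a) a s y from
      funext fun s => hx 1 1 1 s y, hx _ _ _ x y, hy 1 1 1 x y, Qm_smul]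
    exact Qm_congr a x y (by rw [one_mul, one_mul, hcc1 a ha])
      (by rw [one_mul, one_mul, hcc2 a ha]) (by rw [one_mul, one_mul, hcc3 a ha])
  · rw [show (fun s => deriv (fun t => Qm 1 1 1 a s t) y)
        = fun s => Qm (1 * dd1 a) (1 * dd2 a) (1 * dd3 a) a s y from
      funext fun s => hy 1 1 1 s y, hx _ _ _ x y, ← Qm_neg]
    exact Qm_congr a x y (by rw [one_mul, mul_comm, hcd1 a ha])
      (by rw [one_mul, mul_comm, hcd2 a ha])
      (by rw [one_mul, mul_comm, hcd3 a ha])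
  · rw [show (fun s => deriv (fun t => Qm 1 1 1 a x t) s)
        = fun s => Qm (1 * dd1 a) (1 * dd2 a) (1 * dd3 a) a x s from
      funext fun s => hy 1 1 1 x s, hy _ _ _ x y, hx 1 1 1 x y, Qm_smul]
    exact Qm_congr a x y (by rw [one_mul, one_mul, hdd1 a ha])
      (by rw [one_mul, one_mul, hdd2 a ha]) (by rw [one_mul, one_mul, hdd3 a ha])
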